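/- (Multivariate symmetric Hermite interpolation) With notation as above, let g be a symmetric polynomial in U = (U_1,...,U_{p−k}) of degree at most k in each variable, and write g(U) = Σ_{K ⊂_k P} g_K · V[K‖U)/(V[P]·V(U)). Then the coefficients are given by g_K = (−1)^{k(p−k)} · s_K · h(P∖K), where h(X_{P∖K}) = ∂^{[P∖K]}( V(X_{P∖K}) · g(X_{P∖K}) ), i.e., h is obtained by applying to V·g the Hermite derivation operator (for each (x_i,j) ∈ P∖K, take (1/j!)·∂^j with respect to the corresponding variable) and then substituting the roots. -/

import Mathlib

noncomputable section

open Polynomial Finset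

variable {R : Type*} [CommRing R]

/-- Hermite-derivated Vandermonde column: entry in row `r` of the column attached to
the pair `(z, j)` is `(1/j!)·dʲ/dzʲ zʳ = C(r,j)·z^(r-j)`. -/
def hcol (n : ℕ) (zj : R × ℕ) : Fin n → R :=
  fun r => ((r : ℕ).choose zj.2 : R) * zj.1 ^ ((r : ℕ) - zj.2)

/-- Generalized (confluent) Vandermonde determinant of a list of
(point, derivation order) pairs. -/
def gvd (l : List (R × ℕ)) : R :=
  (Matrix.of fun i j : Fin l.length => hcol l.length (l.get j) i).det

/-- View a list of ring elements as underivated column data. -/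
def plain (l : List R) : List (R × ℕ) := l.map (fun x => (x, 0))

/-- `Pi2 A B = ∏_{x ∈ A, y ∈ B} (x - y)`. -/
def Pi2 (A B : List R) : R := (A.map fun x => (B.map fun y => x - y).prod).prod

/-- The ordered sublist of values of `f` indexed by a finite set of positions. -/
def subL {α : Type*} {n : ℕ} (f : Fin n → α) (S : Finset (Fin n)) : List α :=
  (S.sort (· ≤ ·)).map f

/-- The list enumerating first the complement of `S` in increasing order,
then `S` in increasing order. -/
def splitList {n : ℕ} (S : Finset (Fin n)) : List (Fin n) :=
  (Sᶜ.sort (· ≤ ·)) ++ (S.sort (· ≤ ·))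

lemma splitList_length {n : ℕ} (S : Finset (Fin n)) : (splitList S).length = n := by
  have h : S.card ≤ n := le_trans (Finset.card_le_univ S) (by simp)
  simp [splitList, Finset.card_compl]
  omega

lemma splitList_nodup {n : ℕ} (S : Finset (Fin n)) : (splitList S).Nodup := by
  refine List.Nodup.append (Finset.sort_nodup _ _) (Finset.sort_nodup _ _) ?_
  intro a ha hb
  rw [Finset.mem_sort] at ha hb
  exact (Finset.mem_compl.mp ha) hb

/-- The permutation of `Fin n` sending `i` to the `i`-th element of the list
`(Sᶜ sorted) ++ (S sorted)`. -/
def splitPerm {n : ℕ} (S : Finset (Fin n)) : Equiv.Perm (Fin n) :=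
  Equiv.ofBijective (fun i => (splitList S).get (finCongr (splitList_length S).symm i))
    (Finite.injective_iff_bijective.mp
      (fun i j h => (finCongr (splitList_length S).symm).injective
        (List.nodup_iff_injective_get.mp (splitList_nodup S) h)))

/-- The signature `s_S` of the permutation putting the ambient ordered set in the
order (complement of S)‖S. -/
def sgnK {n : ℕ} (S : Finset (Fin n)) : ℤ := Equiv.Perm.sign (splitPerm S)

/-- `V[L‖U)` : generalized Vandermonde determinant over `K[U]` of derivated columns
given by `l` followed by the plain column of the variable `U`. -/
def gvdU {K : Type*} [Field K] (l : List (K × ℕ)) : Polynomial K :=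
  gvd ((l.map fun zj => (Polynomial.C zj.1, zj.2)) ++ [(Polynomial.X, (0:ℕ))])

/-- Multivariate version: `V[l‖U₁‖…‖U_u)`. -/
def gvdMU {K : Type*} [Field K] (u : ℕ) (l : List (K × ℕ)) : MvPolynomial (Fin u) K :=
  gvd ((l.map fun zj => (MvPolynomial.C zj.1, zj.2)) ++
    (List.finRange u).map (fun i => (MvPolynomial.X i, (0:ℕ))))

/-- The multivariate Vandermonde polynomial `∏_{i < j} (U_j - U_i)`. -/
def mvVandermonde (K : Type*) [Field K] (u : ℕ) : MvPolynomial (Fin u) K :=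
  ∏ j : Fin u, ∏ i ∈ Finset.Iio j, (MvPolynomial.X j - MvPolynomial.X i)

/-- The ordered root multiset attached to distinct roots `x i` with
multiplicities `μ i`. -/
def rootList {K : Type*} (x : Fin m → K) (μ : Fin m → ℕ) : List (K × ℕ) :=
  (List.finRange m).flatMap (fun i => (List.range (μ i)).map (fun j => (x i, j)))

/-- The generalized Sylvester double sum `Sylv^{k,ℓ}` of two monic polynomials
given by their root multisets `Pl` and `Ql`. -/
def sylv {K : Type*} [Field K] (Pl Ql : List (K × ℕ)) (k l : ℕ) : Polynomial K :=
  Polynomial.C ((gvd Pl * gvd Ql)⁻¹) *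
    ∑ S ∈ Finset.powersetCard k (Finset.univ : Finset (Fin Pl.length)),
      ∑ T ∈ Finset.powersetCard l (Finset.univ : Finset (Fin Ql.length)),
        (sgnK S * sgnK T) •
          (Polynomial.C (gvd (subL Ql.get Tᶜ ++ subL Pl.get Sᶜ)) *
            gvdU (subL Ql.get T ++ subL Pl.get S))

/-- `MSylv^{k,ℓ}(P,Q)(U) · V(U)` : the multi Sylvester double sum multiplied by the
ordinary Vandermonde determinant of the block `U` of `u` indeterminates. -/
def msylvV {K : Type*} [Field K] (Pl Ql : List (K × ℕ)) (k l u : ℕ) :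
    MvPolynomial (Fin u) K :=
  MvPolynomial.C ((gvd Pl * gvd Ql)⁻¹) *
    ∑ S ∈ Finset.powersetCard k (Finset.univ : Finset (Fin Pl.length)),
      ∑ T ∈ Finset.powersetCard l (Finset.univ : Finset (Fin Ql.length)),
        (sgnK S * sgnK T) •
          (MvPolynomial.C (gvd (subL Ql.get Tᶜ ++ subL Pl.get Sᶜ)) *
            gvdMU u (subL Ql.get T ++ subL Pl.get S))

/-- The ordered root multiset of a polynomial over an algebraically closed field. -/
def rootListOf {K : Type*} [Field K] (P : Polynomial K) : List (K × ℕ) :=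
  letI := Classical.decEq K
  P.roots.toFinset.toList.flatMap
    (fun z => (List.range (P.rootMultiplicity z)).map (fun j => (z, j)))

/-- The Sylvester double sum of two not-necessarily-monic polynomials. -/
def sylvP {K : Type*} [Field K] (P Q : Polynomial K) (k l : ℕ) : Polynomial K :=
  Polynomial.C (P.leadingCoeff ^ (Q.natDegree - (k + l)) *
      Q.leadingCoeff ^ (P.natDegree - (k + l))) *
    sylv (rootListOf P) (rootListOf Q) k l

/-- Rows of the Sylvester–Habicht matrix at level `j`:
`X^{q-j-1}P, …, P, Q, X Q, …, X^{p-j-1}Q`. -/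
def sylvHabRow {K : Type*} [Field K] (P Q : Polynomial K) (j i : ℕ) : Polynomial K :=
  if i < Q.natDegree - j then Polynomial.X ^ (Q.natDegree - j - 1 - i) * P
  else Polynomial.X ^ (i - (Q.natDegree - j)) * Q

/-- The `j`-th subresultant polynomial of `P` and `Q`, as the polynomial determinant
of the Sylvester–Habicht matrix at level `j`. -/
def Sres {K : Type*} [Field K] (P Q : Polynomial K) (j : ℕ) : Polynomial K :=
  (Matrix.of fun i c : Fin (P.natDegree + Q.natDegree - 2 * j) =>
    if (c : ℕ) < P.natDegree + Q.natDegree - 2 * j - 1 then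
      Polynomial.C ((sylvHabRow P Q j i).coeff (P.natDegree + Q.natDegree - j - 1 - c))
    else
      ∑ t ∈ Finset.range (j + 1),
        Polynomial.C ((sylvHabRow P Q j i).coeff t) * Polynomial.X ^ t).det

/-- Iterated normalized Hermite derivation of a multivariate polynomial: for each
variable `i`, apply `(1/(c i).2!)·∂^{(c i).2}/∂X_i^{(c i).2}`. -/
def hderiv {K : Type*} [Field K] {n : ℕ} (c : Fin n → K × ℕ)
    (f : MvPolynomial (Fin n) K) : MvPolynomial (Fin n) K :=
  (List.finRange n).foldl
    (fun g i => (((c i).2.factorial : K)⁻¹) • ((MvPolynomial.pderiv i)^[(c i).2] g)) f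

/-- Hermite evaluation: apply the normalized derivations prescribed by `c` and
then substitute the points prescribed by `c`. -/
def hermiteEval {K : Type*} [Field K] {n : ℕ} (c : Fin n → K × ℕ)
    (f : MvPolynomial (Fin n) K) : K :=
  MvPolynomial.eval (fun i => (c i).1) (hderiv c f)


section AuxHermite

open MvPolynomial

variable {K : Type*} [Field K] [CharZero K] {n : ℕ}

def hstep (c : Fin n → K × ℕ) (g : MvPolynomial (Fin n) K) (i : Fin n) :
    MvPolynomial (Fin n) K :=
  (((c i).2.factorial : K)⁻¹) • ((MvPolynomial.pderiv i)^[(c i).2] g)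

lemma pderiv_iterate_monomial (i : Fin n) (t : ℕ) (s : Fin n →₀ ℕ) (a : K) :
    (pderiv i)^[t] (monomial s a) =
      monomial (s - Finsupp.single i t) (((s i).descFactorial t : K) * a) := by
  induction t with
  | zero => simp
  | succ t ih =>
    rw [Function.iterate_succ_apply', ih, pderiv_monomial]
    rw [Nat.descFactorial_succ]
    congr 1
    · rw [tsub_tsub, ← Finsupp.single_add]
    · have : (s - Finsupp.single i t) i = s i - t := by
        simp [Finsupp.tsub_apply]
      rw [this]
      push_cast [Nat.cast_sub]
      ring_nf

lemma hstep_monomial (c : Fin n → K × ℕ) (i : Fin n) (s : Fin n →₀ ℕ) (a : K) :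
    hstep c (monomial s a) i =
      monomial (s - Finsupp.single i (c i).2) (((s i).choose (c i).2 : K) * a) := by
  rw [hstep, pderiv_iterate_monomial, MvPolynomial.smul_monomial, smul_eq_mul]
  congr 1
  rw [Nat.descFactorial_eq_factorial_mul_choose]
  push_cast
  rw [← mul_assoc, ← mul_assoc, inv_mul_cancel₀ (by exact_mod_cast (c i).2.factorial_ne_zero)]
  ring

lemma hderiv_eq_foldl (c : Fin n → K × ℕ) (f : MvPolynomial (Fin n) K) :
    hderiv c f = (List.finRange n).foldl (hstep c) f := rfl

lemma foldl_hstep_monomial (c : Fin n → K × ℕ) (L : List (Fin n)) (hL : L.Nodup) :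
    ∀ (s : Fin n →₀ ℕ) (a : K),
    L.foldl (hstep c) (monomial s a) =
      monomial (s - (L.map fun i => Finsupp.single i (c i).2).sum)
        ((L.map fun i => (((s i).choose (c i).2 : K))).prod * a) := by
  induction L with
  | nil => intro s a; simp
  | cons i L ih =>
    intro s a
    have hiL : i ∉ L := (List.nodup_cons.mp hL).1
    rw [List.foldl_cons, hstep_monomial, ih (List.nodup_cons.mp hL).2]
    have hmap : (L.map fun i' => (((s - Finsupp.single i (c i).2) i').choose (c i').2 : K))
        = L.map fun i' => (((s i').choose (c i').2 : K)) := by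
      apply List.map_congr_left
      intro i' hi'
      have : (s - Finsupp.single i (c i).2) i' = s i' := by
        rw [Finsupp.tsub_apply, Finsupp.single_apply,
          if_neg (fun h : i = i' => hiL (h ▸ hi'))]
        simp
      rw [this]
    rw [hmap]
    congr 1
    · rw [List.map_cons, List.sum_cons, tsub_tsub]
    · rw [List.map_cons, List.prod_cons]; ring

lemma hderiv_monomial (c : Fin n → K × ℕ) (s : Fin n →₀ ℕ) (a : K) :
    hderiv c (monomial s a) =
      monomial (s - ∑ i : Fin n, Finsupp.single i (c i).2)
        ((∏ i : Fin n, (((s i).choose (c i).2 : K))) * a) := by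
  rw [hderiv_eq_foldl, foldl_hstep_monomial c _ (List.nodup_finRange n),
    Fin.sum_univ_def, Fin.prod_univ_def]

lemma hermiteEval_monomial (c : Fin n → K × ℕ) (s : Fin n →₀ ℕ) (a : K) :
    hermiteEval c (monomial s a) =
      a * ∏ i : Fin n, (((s i).choose (c i).2 : K) * (c i).1 ^ (s i - (c i).2)) := by
  rw [hermiteEval, hderiv_monomial, MvPolynomial.eval_monomial]
  have hkey : ∀ i : Fin n, (s - ∑ i' : Fin n, Finsupp.single i' (c i').2) i
      = s i - (c i).2 := by
    intro i
    rw [Finsupp.tsub_apply]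
    congr 1
    rw [Finsupp.finset_sum_apply]
    rw [Finset.sum_eq_single i (fun b _ hb => by
      rw [Finsupp.single_apply, if_neg hb]) (by simp)]
    simp
  rw [Finsupp.prod_fintype _ _ (fun i => pow_zero _)]
  simp_rw [hkey]
  rw [Finset.prod_mul_distrib]
  ring

lemma iterate_pderiv_add (i : Fin n) (t : ℕ) (f g : MvPolynomial (Fin n) K) :
    (pderiv i)^[t] (f + g) = (pderiv i)^[t] f + (pderiv i)^[t] g := by
  induction t generalizing f g with
  | zero => rfl
  | succ t ih =>
    rw [Function.iterate_succ_apply, Function.iterate_succ_apply,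
      Function.iterate_succ_apply (⇑(pderiv i)) t g, map_add, ih]

lemma iterate_pderiv_smul (i : Fin n) (t : ℕ) (a : K) (f : MvPolynomial (Fin n) K) :
    (pderiv i)^[t] (a • f) = a • (pderiv i)^[t] f := by
  induction t generalizing f with
  | zero => rfl
  | succ t ih =>
    rw [Function.iterate_succ_apply, Function.iterate_succ_apply,
      (pderiv i).map_smul, ih]

lemma hstep_add (c : Fin n → K × ℕ) (f g : MvPolynomial (Fin n) K) (i : Fin n) :
    hstep c (f + g) i = hstep c f i + hstep c g i := by
  rw [hstep, hstep, hstep, iterate_pderiv_add, smul_add]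

lemma hstep_smul (c : Fin n → K × ℕ) (a : K) (f : MvPolynomial (Fin n) K) (i : Fin n) :
    hstep c (a • f) i = a • hstep c f i := by
  rw [hstep, hstep, iterate_pderiv_smul, smul_comm]

lemma foldl_hstep_add (c : Fin n → K × ℕ) (L : List (Fin n)) :
    ∀ f g : MvPolynomial (Fin n) K,
      L.foldl (hstep c) (f + g) = L.foldl (hstep c) f + L.foldl (hstep c) g := by
  induction L with
  | nil => intro f g; rfl
  | cons i L ih =>
    intro f g
    rw [List.foldl_cons, List.foldl_cons, List.foldl_cons, hstep_add, ih]

lemma foldl_hstep_smul (c : Fin n → K × ℕ) (L : List (Fin n)) :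
    ∀ (a : K) (f : MvPolynomial (Fin n) K),
      L.foldl (hstep c) (a • f) = a • L.foldl (hstep c) f := by
  induction L with
  | nil => intro a f; rfl
  | cons i L ih =>
    intro a f
    rw [List.foldl_cons, List.foldl_cons, hstep_smul, ih]

/-- `hermiteEval` as a linear map. -/
def hermiteEvalₗ (c : Fin n → K × ℕ) : MvPolynomial (Fin n) K →ₗ[K] K where
  toFun := hermiteEval c
  map_add' f g := by
    simp only [hermiteEval, hderiv_eq_foldl, foldl_hstep_add, map_add]
  map_smul' a f := by
    simp only [hermiteEval, hderiv_eq_foldl, foldl_hstep_smul, RingHom.id_apply,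
      smul_eq_mul, map_mul]
    rw [MvPolynomial.smul_eq_C_mul _ a, map_mul, MvPolynomial.eval_C]

lemma hermiteEval_C_mul (c : Fin n → K × ℕ) (a : K) (f : MvPolynomial (Fin n) K) :
    hermiteEval c (MvPolynomial.C a * f) = a * hermiteEval c f := by
  have := (hermiteEvalₗ c).map_smul a f
  rw [MvPolynomial.smul_eq_C_mul, smul_eq_mul] at this
  exact this

lemma gvd_eq {R : Type*} [CommRing R] (l : List (R × ℕ)) {N : ℕ} (h : l.length = N) :
    gvd l = (Matrix.of fun i j : Fin N =>
      hcol N (l.get (finCongr h.symm j)) i).det := by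
  subst h; rfl

lemma sum_single_apply {u : ℕ} (e : Fin u → ℕ) (i : Fin u) :
    (∑ i' : Fin u, Finsupp.single i' (e i')) i = e i := by
  rw [Finsupp.finset_sum_apply]
  rw [Finset.sum_eq_single i (fun b _ hb => by rw [Finsupp.single_apply, if_neg hb]) (by simp)]
  simp

lemma prod_X_pow_eq_monomial' {u : ℕ} (e : Fin u → ℕ) :
    (∏ i : Fin u, (MvPolynomial.X i : MvPolynomial (Fin u) K) ^ e i) =
      monomial (∑ i : Fin u, Finsupp.single i (e i)) (1 : K) := by
  induction (Finset.univ : Finset (Fin u)) using Finset.induction with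
  | empty => simp
  | insert _ _ hx ih =>
    rw [Finset.prod_insert hx, Finset.sum_insert hx, ih, MvPolynomial.X_pow_eq_monomial,
      monomial_mul, one_mul]



lemma hermiteEval_gvdMU {u : ℕ} (c : Fin u → K × ℕ) (l : List (K × ℕ)) :
    hermiteEval c (gvdMU u l) = gvd (l ++ (List.finRange u).map c) := by
  classical
  set Lp : List (MvPolynomial (Fin u) K × ℕ) :=
    (l.map fun zj : K × ℕ => (MvPolynomial.C zj.1, zj.2)) ++
      (List.finRange u).map (fun i => (MvPolynomial.X i, (0:ℕ))) with hLp
  have hL : Lp.length = l.length + u := by simp [hLp]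
  have hR : (l ++ (List.finRange u).map c).length = l.length + u := by simp
  rw [gvdMU, gvd_eq _ hL, gvd_eq _ hR, Matrix.det_apply', Matrix.det_apply']
  rw [show hermiteEval c = ⇑(hermiteEvalₗ c) from rfl, map_sum]
  refine Finset.sum_congr rfl fun σ _ => ?_
  have hsgn : ((Equiv.Perm.sign σ : ℤ) : MvPolynomial (Fin u) K)
      = MvPolynomial.C ((Equiv.Perm.sign σ : ℤ) : K) := by
    rw [map_intCast]
  show hermiteEval c _ = _
  rw [hsgn, hermiteEval_C_mul]
  congr 1
  rw [Fin.prod_univ_add, Fin.prod_univ_add]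
  -- first block entries of Lp-matrix
  have e1 : ∀ j : Fin l.length,
      (Matrix.of fun i j : Fin (l.length+u) => hcol (l.length+u)
          (Lp.get (finCongr hL.symm j)) i) (σ (Fin.castAdd u j)) (Fin.castAdd u j)
      = MvPolynomial.C (hcol (l.length+u) (l.get j) (σ (Fin.castAdd u j))) := by
    intro j
    have hget : Lp.get (finCongr hL.symm (Fin.castAdd u j))
        = (MvPolynomial.C (l.get j).1, (l.get j).2) := by
      rw [List.get_of_eq hLp, List.get_eq_getElem,
        List.getElem_append_left (by simp [j.2]), List.getElem_map]
      rfl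
    rw [Matrix.of_apply, hget]
    simp only [hcol]
    rw [map_mul, map_pow, map_natCast]
  -- second block entries
  have e2 : ∀ i : Fin u,
      (Matrix.of fun i' j : Fin (l.length+u) => hcol (l.length+u)
          (Lp.get (finCongr hL.symm j)) i') (σ (Fin.natAdd l.length i)) (Fin.natAdd l.length i)
      = MvPolynomial.X i ^ ((σ (Fin.natAdd l.length i) : ℕ)) := by
    intro i
    have hget : Lp.get (finCongr hL.symm (Fin.natAdd l.length i))
        = (MvPolynomial.X i, (0:ℕ)) := by
      rw [List.get_of_eq hLp, List.get_eq_getElem,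
        List.getElem_append_right (by simp)]
      simp
    rw [Matrix.of_apply, hget]
    simp [hcol]
  simp only [e1, e2]
  rw [← map_prod (MvPolynomial.C : K →+* MvPolynomial (Fin u) K), prod_X_pow_eq_monomial',
    ← MvPolynomial.smul_eq_C_mul]
  rw [show hermiteEval c = ⇑(hermiteEvalₗ c) from rfl, map_smul]
  show _ • hermiteEval c _ = _
  rw [hermiteEval_monomial]
  simp only [sum_single_apply, one_mul, smul_eq_mul]
  -- entries of the RHS matrix
  have f1 : ∀ j : Fin l.length,
      (Matrix.of fun i j : Fin (l.length+u) => hcol (l.length+u)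
          ((l ++ (List.finRange u).map c).get (finCongr hR.symm j)) i)
        (σ (Fin.castAdd u j)) (Fin.castAdd u j)
      = hcol (l.length+u) (l.get j) (σ (Fin.castAdd u j)) := by
    intro j
    rw [Matrix.of_apply]
    congr 1
    rw [List.get_eq_getElem, List.getElem_append_left (by simpa using j.2)]
    rfl
  have f2 : ∀ i : Fin u,
      (Matrix.of fun i' j : Fin (l.length+u) => hcol (l.length+u)
          ((l ++ (List.finRange u).map c).get (finCongr hR.symm j)) i')
        (σ (Fin.natAdd l.length i)) (Fin.natAdd l.length i)
      = hcol (l.length+u) (c i) (σ (Fin.natAdd l.length i)) := by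
    intro i
    rw [Matrix.of_apply]
    congr 1
    rw [List.get_eq_getElem, List.getElem_append_right (by simp)]
    simp
  simp only [f1, f2]
  simp only [hcol]

lemma rootList_length {m : ℕ} (x : Fin m → K) (μ : Fin m → ℕ) :
    (rootList x μ).length = ∑ i, μ i := by
  simp [rootList, Fin.sum_univ_def, Function.comp_def]

lemma mem_rootList {m : ℕ} {x : Fin m → K} {μ : Fin m → ℕ} {z : K} {t : ℕ} :
    (z, t) ∈ rootList x μ ↔ ∃ i, x i = z ∧ t < μ i := by
  constructor
  · intro h
    rw [rootList, List.mem_flatMap] at h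
    obtain ⟨i, _, hi⟩ := h
    rw [List.mem_map] at hi
    obtain ⟨j, hj, hji⟩ := hi
    rw [Prod.mk.injEq] at hji
    exact ⟨i, hji.1, hji.2 ▸ List.mem_range.mp hj⟩
  · rintro ⟨i, rfl, ht⟩
    rw [rootList, List.mem_flatMap]
    exact ⟨i, List.mem_finRange i, List.mem_map.mpr ⟨t, List.mem_range.mpr ht, rfl⟩⟩

lemma gvd_rootList_ne_zero {m : ℕ} (x : Fin m → K) (μ : Fin m → ℕ)
    (hx : Function.Injective x) : gvd (rootList x μ) ≠ 0 := by
  classical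
  intro h0
  set P := rootList x μ with hP
  set p := P.length with hp
  have hsum : p = ∑ i, μ i := rootList_length x μ
  obtain ⟨w, hw0, hwM⟩ := (Matrix.exists_vecMul_eq_zero_iff (A := K)).mpr h0
  set f : Polynomial K := ∑ r : Fin p, Polynomial.C (w r) * Polynomial.X ^ (r : ℕ) with hf
  have hp0 : 0 < p := by
    rcases Nat.eq_zero_or_pos p with h | h
    · exact absurd (funext fun r : Fin p => Fin.elim0 (h ▸ r)) hw0
    · exact h
  have hcoeff : ∀ r : Fin p, f.coeff (r : ℕ) = w r := by
    intro r
    rw [hf, Polynomial.finset_sum_coeff]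
    rw [Finset.sum_eq_single r (fun b _ hb => by
      rw [Polynomial.coeff_C_mul, Polynomial.coeff_X_pow,
        if_neg (fun h => hb (Fin.ext h.symm)), mul_zero]) (by simp)]
    simp
  have hf0 : f ≠ 0 := by
    obtain ⟨r, hr⟩ := Function.ne_iff.mp hw0
    intro h
    exact hr (by rw [Pi.zero_apply, ← hcoeff r, h, Polynomial.coeff_zero])
  have hdeg : f.natDegree < p := by
    rw [Polynomial.natDegree_lt_iff_degree_lt hf0, hf]
    refine lt_of_le_of_lt (Polynomial.degree_sum_le _ _) ?_
    rw [Finset.sup_lt_iff (by exact_mod_cast WithBot.bot_lt_coe p)]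
    intro r _
    exact lt_of_le_of_lt (Polynomial.degree_C_mul_X_pow_le _ _) (by exact_mod_cast r.2)
  -- vanishing of Hasse derivatives
  have hvan : ∀ z t, (z, t) ∈ P → (Polynomial.hasseDeriv t f).eval z = 0 := by
    intro z t hzt
    obtain ⟨j, hj⟩ := List.mem_iff_get.mp hzt
    have hcol0 : ∑ i : Fin p, w i * ((i : ℕ).choose t : K) * z ^ ((i : ℕ) - t) = 0 := by
      have := congrFun hwM j
      simp only [Matrix.vecMul, dotProduct, Matrix.of_apply, Pi.zero_apply] at this
      rw [← this]
      refine Finset.sum_congr rfl fun i _ => ?_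
      rw [hj]
      simp only [hcol]
      ring
    rw [hf, map_sum, Polynomial.eval_finset_sum]
    rw [← hcol0]
    refine Finset.sum_congr rfl fun r _ => ?_
    rw [← Polynomial.smul_eq_C_mul, map_smul, Polynomial.X_pow_eq_monomial,
      Polynomial.hasseDeriv_monomial]
    simp [mul_assoc]
  -- multiplicities
  have hmult : ∀ i, μ i ≤ f.rootMultiplicity (x i) := by
    intro i
    rw [Polynomial.rootMultiplicity_eq_natTrailingDegree, ← Polynomial.taylor_apply]
    refine Polynomial.le_natTrailingDegree (fun ht => hf0 (Polynomial.taylor_injective _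
      (by rw [ht, map_zero]))) ?_
    intro s hs
    rw [Polynomial.taylor_coeff]
    exact hvan (x i) s (mem_rootList.mpr ⟨i, rfl, hs⟩)
  -- count roots
  set M : Multiset K := ∑ i : Fin m, Multiset.replicate (μ i) (x i) with hM
  have hle : M ≤ f.roots := by
    rw [Multiset.le_iff_count]
    intro z
    rw [hM, Multiset.count_sum']
    by_cases hz : ∃ i, x i = z
    · obtain ⟨i₀, hi₀⟩ := hz
      rw [Finset.sum_eq_single i₀ (fun b _ hb => by
        rw [Multiset.count_replicate, if_neg (fun h => hb (hx (h.trans hi₀.symm)))])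
        (by simp)]
      rw [Multiset.count_replicate, if_pos hi₀, Polynomial.count_roots, ← hi₀]
      exact hmult i₀
    · have : ∀ b ∈ Finset.univ, Multiset.count z (Multiset.replicate (μ b) (x b)) = 0 := by
        intro b _
        rw [Multiset.count_replicate, if_neg (fun h => hz ⟨b, h⟩)]
      rw [Finset.sum_congr rfl this]
      simp
  have hcard : (Multiset.card M : ℕ) = p := by
    rw [hM, hsum]
    rw [Multiset.card_sum]
    simp
  have := Multiset.card_le_card hle
  rw [hcard] at this
  have := lt_of_le_of_lt (le_trans this (Polynomial.card_roots' f)) hdeg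
  omega

lemma neg_one_pow_congr' {R : Type*} [Monoid R] [HasDistribNeg R] {a b : ℕ}
    (h : a % 2 = b % 2) : (-1 : R) ^ a = (-1) ^ b := by
  conv_lhs => rw [← Nat.div_add_mod a 2]
  conv_rhs => rw [← Nat.div_add_mod b 2]
  rw [pow_add, pow_add, pow_mul, pow_mul, neg_one_sq, one_pow, one_pow, h]

open Fin.NatCast in
lemma finRotate_pow_apply {n u : ℕ} (j : Fin (n + 1)) :
    ((finRotate (n + 1)) ^ u) j = j + (u : Fin (n + 1)) := by
  induction u with
  | zero => simp
  | succ u ih =>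
    rw [pow_succ', Equiv.Perm.mul_apply, ih, finRotate_succ_apply, Nat.cast_add,
      Nat.cast_one, add_assoc]

open Fin.NatCast in
lemma finRotate_pow_val {n u : ℕ} (hn : 0 < n) (j : Fin n) :
    ((((finRotate n) ^ u) j : Fin n) : ℕ) = (j + u) % n := by
  obtain ⟨n, rfl⟩ := Nat.exists_eq_succ_of_ne_zero hn.ne'
  simp only [finRotate_pow_apply, Fin.add_def, Fin.val_natCast]
  conv_lhs => rw [Nat.add_mod]
  conv_rhs => rw [Nat.add_mod]
  rw [Nat.mod_mod_of_dvd u (dvd_refl (n+1))]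

lemma subL_length {n : ℕ} (f : Fin n → R × ℕ) (S : Finset (Fin n)) :
    (subL f S).length = S.card := by simp [subL]

lemma gvd_append_compl_eq_zero {n : ℕ} {S T : Finset (Fin n)}
    (hc : T.card = S.card) (hne : T ≠ S) (f : Fin n → R × ℕ) :
    gvd (subL f T ++ subL f Sᶜ) = 0 := by
  obtain ⟨q, hqT, hqS⟩ : ∃ q ∈ T, q ∉ S :=
    Finset.not_subset.mp (fun hsub => hne (Finset.eq_of_subset_of_card_le hsub hc.ge))
  obtain ⟨a, ha⟩ := List.mem_iff_get.mp ((Finset.mem_sort (α := Fin n) (· ≤ ·)).mpr hqT)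
  obtain ⟨b, hb⟩ := List.mem_iff_get.mp ((Finset.mem_sort (α := Fin n) (· ≤ ·)).mpr (Finset.mem_compl.mpr hqS))
  have hlen : (subL f T ++ subL f Sᶜ).length
      = (T.sort (· ≤ ·)).length + (Sᶜ.sort (· ≤ ·)).length := by simp [subL]
  have ha2 := a.2
  have hb2 := b.2
  simp only [Finset.length_sort] at ha2 hb2
  have ha' : (a : ℕ) < (subL f T ++ subL f Sᶜ).length := by rw [hlen]; omega
  have hb' : ((T.sort (· ≤ ·)).length + (b : ℕ)) < (subL f T ++ subL f Sᶜ).length := by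
    rw [hlen]; omega
  rw [gvd]
  refine Matrix.det_zero_of_column_eq (i := ⟨a, ha'⟩)
    (j := ⟨(T.sort (· ≤ ·)).length + (b : ℕ), hb'⟩)
    (Fin.ne_of_val_ne (by simp only [Fin.val_mk, Finset.length_sort]; omega)) (fun i => ?_)
  simp only [Matrix.of_apply]
  congr 1
  have h1 : (subL f T ++ subL f Sᶜ).get ⟨a, ha'⟩ = f q := by
    rw [List.get_eq_getElem, List.getElem_append_left (by simpa [subL] using a.2)]
    simp only [subL, List.getElem_map]
    rw [← List.get_eq_getElem, ha]
  have h2 : (subL f T ++ subL f Sᶜ).get ⟨(T.sort (· ≤ ·)).length + (b : ℕ), hb'⟩ = f q := by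
    rw [List.get_eq_getElem, List.getElem_append_right (by simp [subL])]
    simp only [subL, List.getElem_map]
    congr 1
    rw [← hb]
    congr 1
    simp [subL]
  rw [h1, h2]


lemma splitList_getElem {n : ℕ} (S : Finset (Fin n)) (t : ℕ) (ht : t < n) :
    (splitList S)[t]'(by rw [splitList_length]; exact ht)
      = if h : t < Sᶜ.card then (Sᶜ.sort (· ≤ ·))[t]'(by simpa using h)
        else (S.sort (· ≤ ·))[t - Sᶜ.card]'(by
          simp only [Finset.length_sort]
          have h1 : Sᶜ.card = n - S.card := by rw [Finset.card_compl]; simp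
          have h2 : S.card ≤ n := by simpa using Finset.card_le_univ S
          omega) := by
  unfold splitList
  by_cases h : t < Sᶜ.card
  · rw [dif_pos h, List.getElem_append_left (by simpa using h)]
  · rw [dif_neg h, List.getElem_append_right (by simpa using h)]
    congr 1
    simp

set_option maxHeartbeats 1000000 in
lemma gvd_subL_split {n : ℕ} (S : Finset (Fin n)) (f : Fin n → R × ℕ) :
    gvd (subL f S ++ subL f Sᶜ)
      = (-1 : R) ^ (S.card * (n - S.card)) * ((sgnK S : ℤ) : R) *
        (Matrix.of fun i j : Fin n => hcol n (f j) i).det := by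
  rcases Nat.eq_zero_or_pos n with hn | hn
  · subst hn
    have hS : S = ∅ := Finset.eq_empty_of_isEmpty S
    have hsp : splitPerm S = 1 := Equiv.ext fun i => i.elim0
    have hsgn : sgnK S = 1 := by rw [sgnK, hsp, map_one]; rfl
    rw [hsgn, hS]
    have h1 : subL f (∅ : Finset (Fin 0)) = [] := by simp [subL]
    have h2 : subL f (∅ : Finset (Fin 0))ᶜ = [] := by
      rw [show (∅ : Finset (Fin 0))ᶜ = ∅ from Finset.eq_empty_of_isEmpty _]; simp [subL]
    rw [h1, h2]
    simp [gvd, Matrix.det_fin_zero]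
  · have hk : S.card ≤ n := by simpa using Finset.card_le_univ S
    have hck : Sᶜ.card = n - S.card := by rw [Finset.card_compl]; simp
    set k := S.card with hkdef
    set u := n - S.card with hudef
    have hku : k + u = n := by omega
    have hlen : (subL f S ++ subL f Sᶜ).length = n := by
      simp [subL_length, hck]; omega
    set ρ : Equiv.Perm (Fin n) := (finRotate n) ^ u with hρ
    have key : ∀ j : Fin n, (subL f S ++ subL f Sᶜ).get (finCongr hlen.symm j)
        = f (splitPerm S (ρ j)) := by
      intro j
      have hρval : ((ρ j : Fin n) : ℕ) = ((j : ℕ) + u) % n := finRotate_pow_val hn j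
      have hsp : splitPerm S (ρ j)
          = (splitList S).get (finCongr (splitList_length S).symm (ρ j)) := rfl
      rw [hsp, List.get_eq_getElem, List.get_eq_getElem]
      have hval : ((finCongr (splitList_length S).symm (ρ j)) : ℕ) = ((j : ℕ) + u) % n := by
        simp [hρval]
      have hval2 : ((finCongr hlen.symm j) : ℕ) = (j : ℕ) := rfl
      simp only [hval, hval2]
      rw [splitList_getElem S _ (Nat.mod_lt _ hn)]
      by_cases hj : (j : ℕ) < k
      · have hmod : ((j : ℕ) + u) % n = (j : ℕ) + u := Nat.mod_eq_of_lt (by omega)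
        simp only [hmod, hck]
        rw [dif_neg (by omega)]
        rw [List.getElem_append_left (by simp [subL]; omega)]
        simp only [subL, List.getElem_map, Nat.add_sub_cancel]
      · have hmod : ((j : ℕ) + u) % n = (j : ℕ) - k := by
          rw [Nat.mod_eq_sub_mod (by omega), Nat.mod_eq_of_lt (by omega)]
          omega
        simp only [hmod, hck]
        rw [dif_pos (by omega)]
        rw [List.getElem_append_right (by simp [subL]; omega)]
        simp only [subL, List.getElem_map, List.length_map, Finset.length_sort]
        rfl
    rw [gvd_eq _ hlen]
    have hmat : (Matrix.of fun i j : Fin n =>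
          hcol n ((subL f S ++ subL f Sᶜ).get (finCongr hlen.symm j)) i)
        = (Matrix.of fun i j : Fin n => hcol n (f j) i).submatrix id ((splitPerm S) * ρ) := by
      ext i j
      rw [Matrix.submatrix_apply, Matrix.of_apply, Matrix.of_apply, key j]
      rfl
    rw [hmat, Matrix.det_permute']
    congr 1
    obtain ⟨n', rfl⟩ := Nat.exists_eq_succ_of_ne_zero hn.ne'
    rw [map_mul, hρ, map_pow, sign_finRotate, sgnK]
    push_cast
    rw [mul_comm]
    congr 1
    rw [← pow_mul]
    refine neg_one_pow_congr' ?_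
    rcases Nat.eq_zero_or_pos u with hu | hu
    · simp [hu]
    · obtain ⟨c, hc⟩ : Even ((u - 1) * u) := by
        have := Nat.even_mul_succ_self (u - 1)
        rwa [Nat.sub_add_cancel hu] at this
      have : n' * u = k * u + (u - 1) * u := by
        have : n' = k + (u - 1) := by omega
        rw [this, Nat.add_mul]
      omega

end AuxHermite

/-- multivariate symmetric Hermite interpolation: the coordinates
of a symmetric polynomial `g` in the basis `V[K‖U)/(V[P]V(U))` are
`g_K = (−1)^{k(p−k)} s_K · ∂^{[P∖K]}(V·g)(P∖K)`. -/
theorem hermite_interpolation_coords {K : Type*} [Field K] [CharZero K] {m k : ℕ}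
    (x : Fin m → K) (μ : Fin m → ℕ) (hx : Function.Injective x)
    (hμ : ∀ i, 0 < μ i) (hk : k ≤ (rootList x μ).length)
    (g : MvPolynomial (Fin ((rootList x μ).length - k)) K)
    (hsym : g.IsSymmetric) (hdeg : ∀ v, g.degreeOf v ≤ k)
    (gc : {S : Finset (Fin (rootList x μ).length) // S.card = k} → K)
    (hgc : MvPolynomial.C (gvd (rootList x μ)) *
        (g * mvVandermonde K ((rootList x μ).length - k)) =
      ∑ S : {S : Finset (Fin (rootList x μ).length) // S.card = k},
        MvPolynomial.C (gc S) *
          gvdMU ((rootList x μ).length - k) (subL (rootList x μ).get S.1)) :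
    ∀ S : {S : Finset (Fin (rootList x μ).length) // S.card = k},
      gc S = (-1 : K) ^ (k * ((rootList x μ).length - k)) * (sgnK S.1 : K) *
        hermiteEval
          (fun i => (rootList x μ).get
            ((S.1ᶜ.orderIsoOfFin (by simp [Finset.card_compl, S.2])) i))
          (mvVandermonde K ((rootList x μ).length - k) * g) := by
  intro S
  classical
  have hcompl : S.1ᶜ.card = (rootList x μ).length - k := by
    simp [Finset.card_compl, S.2]
  set c : Fin ((rootList x μ).length - k) → K × ℕ := fun i => (rootList x μ).get
      ((S.1ᶜ.orderIsoOfFin (by simp [Finset.card_compl, S.2])) i) with hc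
  have hcc : (List.finRange ((rootList x μ).length - k)).map c
      = subL (rootList x μ).get S.1ᶜ := by
    apply List.ext_getElem
    · simp [subL, hcompl]
    · intro i h1 h2
      simp only [List.getElem_map, List.getElem_finRange, hc, subL]
      congr 1
  have H := congrArg (hermiteEval c) hgc
  rw [hermiteEval_C_mul] at H
  rw [show hermiteEval c = ⇑(hermiteEvalₗ c) from rfl, map_sum] at H
  have hRT : ∀ T : {T : Finset (Fin (rootList x μ).length) // T.card = k},
      (hermiteEvalₗ c) (MvPolynomial.C (gc T) *
          gvdMU ((rootList x μ).length - k) (subL (rootList x μ).get T.1))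
        = gc T * gvd (subL (rootList x μ).get T.1 ++ subL (rootList x μ).get S.1ᶜ) := by
    intro T
    show hermiteEval c _ = _
    rw [hermiteEval_C_mul, hermiteEval_gvdMU, hcc]
  rw [Finset.sum_congr rfl (fun T _ => hRT T)] at H
  rw [Finset.sum_eq_single_of_mem S (Finset.mem_univ S) (fun T _ hTS => by
    rw [gvd_append_compl_eq_zero (T.2.trans S.2.symm)
      (fun h => hTS (Subtype.ext h)) _, mul_zero])] at H
  rw [gvd_subL_split] at H
  have hdet : (Matrix.of fun i j : Fin (rootList x μ).length =>
      hcol (rootList x μ).length ((rootList x μ).get j) i).det = gvd (rootList x μ) := rfl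
  rw [hdet, S.2] at H
  set ε : K := (-1 : K) ^ (k * ((rootList x μ).length - k)) * ((sgnK S.1 : ℤ) : K) with hε
  have hgvd : gvd (rootList x μ) ≠ 0 := gvd_rootList_ne_zero x μ hx
  have hε2 : ε * ε = 1 := by
    have hs2 : ((sgnK S.1 : ℤ) : K) * ((sgnK S.1 : ℤ) : K) = 1 := by
      rcases Int.units_eq_one_or (Equiv.Perm.sign (splitPerm S.1)) with h | h <;>
        rw [sgnK, h] <;> norm_num
    have hp2 : ((-1:K) ^ (k * ((rootList x μ).length - k)))
        * ((-1:K) ^ (k * ((rootList x μ).length - k))) = 1 := by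
      rw [← mul_pow]; norm_num
    have : ε * ε = (((-1:K) ^ (k * ((rootList x μ).length - k)))
        * ((-1:K) ^ (k * ((rootList x μ).length - k))))
        * (((sgnK S.1 : ℤ) : K) * ((sgnK S.1 : ℤ) : K)) := by rw [hε]; ring
    rw [this, hs2, hp2, mul_one]
  have hX : hermiteEval c (g * mvVandermonde K ((rootList x μ).length - k)) = gc S * ε := by
    refine mul_left_cancel₀ hgvd (H.trans ?_)
    rw [hε]
    ring
  calc gc S = gc S * (ε * ε) := by rw [hε2, mul_one]
    _ = ε * (gc S * ε) := by ring
    _ = ε * hermiteEval c (g * mvVandermonde K ((rootList x μ).length - k)) := by rw [hX]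
    _ = _ := by rw [hε, mul_comm g]


end
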